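/- (Asymptotic mmW UDN spectral-efficiency bound limit.) Fix reals α > 2, c > 0, K > 0 and ρ' ≥ 0. Then (1/log L) · ∫₀^∞ (1 − e^{−K·(1 + (ρ'/L)·(e^t − 1)^{2/α})}) · max(0, 1 − (c/L)·(e^t − 1)^{2/α}) dt tends to (α/2)·(1 − e^{−K}) as L → ∞. -/

import Mathlib

open Real Filter MeasureTheory

open Set



private lemma aux_lim (A D : ℝ) :
    Tendsto (fun L : ℝ => (1 / Real.log L) * (A * Real.log L + D)) atTop (nhds A) := by
  have h1 : Tendsto (fun y : ℝ => A + D * y⁻¹) atTop (nhds (A + D * 0)) :=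
    tendsto_const_nhds.add (tendsto_const_nhds.mul tendsto_inv_atTop_zero)
  rw [mul_zero, add_zero] at h1
  have h3 : Tendsto (fun y : ℝ => (1 / y) * (A * y + D)) atTop (nhds A) := by
    apply Tendsto.congr' _ h1
    filter_upwards [eventually_gt_atTop (0:ℝ)] with y hy
    field_simp
  exact h3.comp Real.tendsto_log_atTop


private lemma exp_integral (α : ℝ) (hα : 0 < α) (T : ℝ) :
    ∫ t in (0:ℝ)..T, Real.exp ((2/α)*t) = (α/2) * (Real.exp ((2/α)*T) - 1) := by
  have hd : ∀ x : ℝ, HasDerivAt (fun t => (α/2) * Real.exp ((2/α)*t)) (Real.exp ((2/α)*x)) x := by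
    intro x
    have h1 : HasDerivAt (fun t : ℝ => (2/α)*t) (2/α) x := by
      simpa using (hasDerivAt_id x).const_mul (2/α)
    have h2 := (Real.hasDerivAt_exp ((2/α)*x)).comp x h1
    have h3 := h2.const_mul (α/2)
    refine h3.congr_deriv ?_
    field_simp
  rw [intervalIntegral.integral_eq_sub_of_hasDerivAt (fun x _ => hd x)
    ((Real.continuous_exp.comp (continuous_const.mul continuous_id)).intervalIntegrable 0 T)]
  simp only [mul_zero, Real.exp_zero]
  ring

set_option maxHeartbeats 2000000 in
private lemma key_bounds (α c K ρ' L : ℝ) (hα : 2 < α) (hc : 0 < c) (hK : 0 < K)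
    (hρ' : 0 ≤ ρ') (hL1 : 1 < L) (hLc : c ≤ L) :
    (1 - Real.exp (-K)) * ((α/2) * Real.log (L/c) - α/2) ≤
      (∫ t in Set.Ioi (0:ℝ),
        (1 - Real.exp (-(K * (1 + (ρ' / L) * (Real.exp t - 1) ^ (2 / α))))) *
          max 0 (1 - (c / L) * (Real.exp t - 1) ^ (2 / α))) ∧
    (∫ t in Set.Ioi (0:ℝ),
        (1 - Real.exp (-(K * (1 + (ρ' / L) * (Real.exp t - 1) ^ (2 / α))))) *
          max 0 (1 - (c / L) * (Real.exp t - 1) ^ (2 / α))) ≤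
      (1 - Real.exp (-K)) * (Real.log 2 + (α/2) * Real.log (L/c)) + K * ρ' * α / c := by
  have hα0 : (0:ℝ) < α := by linarith
  have hq : (0:ℝ) < 2/α := by positivity
  have hq1 : 2/α ≤ 1 := by rw [div_le_one hα0]; linarith
  have hL0 : (0:ℝ) < L := by linarith
  have hLc0 : (0:ℝ) < L/c := by positivity
  have hLc1 : (1:ℝ) ≤ L/c := (one_le_div hc).mpr hLc
  set C := 1 - Real.exp (-K) with hCdef
  have hC0 : 0 ≤ C := by
    have : Real.exp (-K) ≤ 1 := Real.exp_le_one_iff.mpr (by linarith)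
    simp [hCdef]; linarith
  have hC1 : C ≤ 1 := by
    have := Real.exp_pos (-K); simp [hCdef]; linarith
  set x : ℝ → ℝ := fun t => (Real.exp t - 1) ^ (2/α) with hxdef
  set f : ℝ → ℝ := fun t =>
    (1 - Real.exp (-(K * (1 + (ρ' / L) * (Real.exp t - 1) ^ (2 / α))))) *
      max 0 (1 - (c / L) * (Real.exp t - 1) ^ (2 / α)) with hfdef
  set u := (L/c) ^ (α/2) with hudef
  have hu1 : (1:ℝ) ≤ u := Real.one_le_rpow hLc1 (by positivity)
  have hu0 : (0:ℝ) < u := by linarith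
  set T := Real.log (1 + u) with hTdef
  have hT0 : 0 ≤ T := Real.log_nonneg (by linarith)
  set S := (α/2) * Real.log (L/c) with hSdef
  have hSu : S = Real.log u := (Real.log_rpow hLc0 (α/2)).symm
  have hS0 : 0 ≤ S := by rw [hSu]; exact Real.log_nonneg hu1
  have hST : S ≤ T := by
    rw [hSu, hTdef]
    exact Real.log_le_log hu0 (by linarith)
  -- basic facts about x
  have hx0 : ∀ t : ℝ, 0 ≤ t → 0 ≤ x t := by
    intro t ht
    have : (1:ℝ) ≤ Real.exp t := by
      simpa using Real.exp_le_exp.mpr ht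
    exact Real.rpow_nonneg (by linarith) _
  have hxle : ∀ t : ℝ, 0 ≤ t → x t ≤ Real.exp ((2/α)*t) := by
    intro t ht
    have h1 : (1:ℝ) ≤ Real.exp t := by simpa using Real.exp_le_exp.mpr ht
    calc (Real.exp t - 1) ^ (2/α) ≤ (Real.exp t) ^ (2/α) :=
          Real.rpow_le_rpow (by linarith) (by linarith) hq.le
      _ = Real.exp (t * (2/α)) := (Real.exp_mul t (2/α)).symm
      _ = Real.exp ((2/α)*t) := by ring_nf
  -- continuity
  have hxcont : Continuous x := by
    apply Continuous.rpow_const (Real.continuous_exp.sub continuous_const)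
    intro t; exact Or.inr hq.le
  have hfcont : Continuous f := by
    apply Continuous.mul
    · exact continuous_const.sub (Real.continuous_exp.comp
        ((continuous_const.mul (continuous_const.add (continuous_const.mul hxcont)))).neg)
    · exact continuous_const.max (continuous_const.sub (continuous_const.mul hxcont))
  -- f vanishes beyond T
  have hxu : u ^ (2/α) = L/c := by
    rw [hudef, ← Real.rpow_mul hLc0.le]
    rw [show (α/2) * (2/α) = 1 by field_simp]
    exact Real.rpow_one _
  have hzero : ∀ t ∈ Set.Ioi T, f t = 0 := by
    intro t ht
    have het : 1 + u ≤ Real.exp t := by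
      have := Real.exp_le_exp.mpr (le_of_lt ht)
      rwa [hTdef, Real.exp_log (by linarith)] at this
    have hxt : L/c ≤ x t := by
      rw [← hxu]
      exact Real.rpow_le_rpow hu0.le (by linarith) hq.le
    have : 1 - (c / L) * (Real.exp t - 1) ^ (2 / α) ≤ 0 := by
      have h2 : (c/L) * (L/c) ≤ (c/L) * x t :=
        mul_le_mul_of_nonneg_left hxt (by positivity)
      have h3 : (c/L) * (L/c) = 1 := by field_simp
      simp only [hxdef] at hxt ⊢
      nlinarith
    simp only [hfdef]
    rw [max_eq_left this, mul_zero]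
  -- nonnegativity of f on [0, ∞)
  have hfnn : ∀ t : ℝ, 0 ≤ t → 0 ≤ f t := by
    intro t ht
    have hxt := hx0 t ht
    apply mul_nonneg
    · have : Real.exp (-(K * (1 + (ρ' / L) * (Real.exp t - 1) ^ (2 / α)))) ≤ 1 := by
        apply Real.exp_le_one_iff.mpr
        have : 0 ≤ (ρ'/L) * x t := mul_nonneg (by positivity) hxt
        simp only [hxdef] at this
        nlinarith
      linarith
    · exact le_max_left _ _
  -- integrability
  have hintT : IntegrableOn f (Set.Ioc 0 T) := hfcont.integrableOn_Ioc
  have hintIoi : IntegrableOn f (Set.Ioi T) := by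
    rw [integrableOn_congr_fun hzero measurableSet_Ioi]
    exact integrableOn_zero
  -- split the integral
  have hsplit : (∫ t in Set.Ioi (0:ℝ), f t) = ∫ t in Set.Ioc 0 T, f t := by
    rw [← Set.Ioc_union_Ioi_eq_Ioi hT0,
      setIntegral_union (Set.Ioc_disjoint_Ioi le_rfl) measurableSet_Ioi hintT hintIoi,
      setIntegral_eq_zero_of_forall_eq_zero hzero, add_zero]
  -- upper bound
  set g : ℝ → ℝ := fun t => C + (K*ρ'/L) * Real.exp ((2/α)*t) with hgdef
  have hgcont : Continuous g := continuous_const.add (continuous_const.mul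
    (Real.continuous_exp.comp (continuous_const.mul continuous_id)))
  have hintg : IntegrableOn g (Set.Ioc 0 T) := hgcont.integrableOn_Ioc
  have hfg : ∀ t ∈ Set.Ioc 0 T, f t ≤ g t := by
    intro t ht
    obtain ⟨ht0, htT⟩ := ht
    have hxt := hx0 t ht0.le
    have hxlet := hxle t ht0.le
    have hm1 : max 0 (1 - (c / L) * (Real.exp t - 1) ^ (2 / α)) ≤ 1 := by
      apply max_le (by norm_num)
      have : 0 ≤ (c/L) * x t := mul_nonneg (by positivity) hxt
      simp only [hxdef] at this; nlinarith
    have hA0 : 0 ≤ 1 - Real.exp (-(K * (1 + (ρ' / L) * (Real.exp t - 1) ^ (2 / α)))) := by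
      have h1 : 0 ≤ (ρ'/L) * x t := mul_nonneg (by positivity) hxt
      have h2 : Real.exp (-(K * (1 + (ρ' / L) * (Real.exp t - 1) ^ (2 / α)))) ≤ 1 := by
        apply Real.exp_le_one_iff.mpr
        simp only [hxdef] at h1
        nlinarith
      linarith
    have hAle : 1 - Real.exp (-(K * (1 + (ρ' / L) * (Real.exp t - 1) ^ (2 / α)))) ≤
        C + (K*ρ'/L) * Real.exp ((2/α)*t) := by
      set a := K * ((ρ'/L) * x t) with hadef
      have ha0 : 0 ≤ a := mul_nonneg hK.le (mul_nonneg (by positivity) hxt)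
      have hsplit2 : Real.exp (-(K * (1 + (ρ' / L) * (Real.exp t - 1) ^ (2 / α)))) =
          Real.exp (-K) * Real.exp (-a) := by
        rw [← Real.exp_add]
        congr 1
        simp only [hadef, hxdef]
        ring
      have h1 : 1 - Real.exp (-a) ≤ a := by nlinarith [Real.add_one_le_exp (-a)]
      have h2 : Real.exp (-a) ≤ 1 := Real.exp_le_one_iff.mpr (by linarith)
      have h3 : Real.exp (-K) ≤ 1 := Real.exp_le_one_iff.mpr (by linarith)
      have h4 : 0 < Real.exp (-K) := Real.exp_pos _
      have h5 : a ≤ (K*ρ'/L) * Real.exp ((2/α)*t) := by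
        have he : a = (K*ρ'/L) * x t := by rw [hadef]; ring
        rw [he]
        exact mul_le_mul_of_nonneg_left hxlet (by positivity)
      rw [hsplit2, hCdef]
      nlinarith
    calc f t ≤ (1 - Real.exp (-(K * (1 + (ρ' / L) * (Real.exp t - 1) ^ (2 / α))))) * 1 :=
          mul_le_mul_of_nonneg_left hm1 hA0
      _ = 1 - Real.exp (-(K * (1 + (ρ' / L) * (Real.exp t - 1) ^ (2 / α)))) := mul_one _
      _ ≤ g t := hAle
  have hupper1 : (∫ t in Set.Ioc 0 T, f t) ≤ ∫ t in Set.Ioc 0 T, g t :=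
    setIntegral_mono_on hintT hintg measurableSet_Ioc hfg
  have hgint : (∫ t in Set.Ioc 0 T, g t) =
      C * T + (K*ρ'/L) * ((α/2) * (Real.exp ((2/α)*T) - 1)) := by
    rw [← intervalIntegral.integral_of_le hT0]
    have h2 : IntervalIntegrable (fun t => (K*ρ'/L) * Real.exp ((2/α)*t)) volume 0 T :=
      (continuous_const.mul (Real.continuous_exp.comp
        (continuous_const.mul continuous_id))).intervalIntegrable 0 T
    rw [hgdef]
    rw [intervalIntegral.integral_add intervalIntegrable_const h2,
      intervalIntegral.integral_const, intervalIntegral.integral_const_mul,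
      exp_integral α hα0 T]
    simp
    ring
  have hTle : T ≤ Real.log 2 + S := by
    rw [hTdef, hSu]
    calc Real.log (1+u) ≤ Real.log (2*u) := Real.log_le_log (by linarith) (by linarith)
      _ = Real.log 2 + Real.log u := Real.log_mul two_ne_zero (ne_of_gt hu0)
  have hexpT : Real.exp ((2/α)*T) ≤ 2*(L/c) := by
    have h1 : Real.exp ((2/α)*T) = (1+u) ^ (2/α) := by
      rw [hTdef, mul_comm, Real.exp_mul, Real.exp_log (by linarith)]
    rw [h1]
    calc (1+u) ^ (2/α) ≤ (2*u) ^ (2/α) :=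
          Real.rpow_le_rpow (by linarith) (by linarith) hq.le
      _ = 2 ^ (2/α) * u ^ (2/α) := Real.mul_rpow (by norm_num) hu0.le
      _ ≤ 2 * (L/c) := by
          rw [hxu]
          have h2 : (2:ℝ) ^ (2/α) ≤ 2 ^ (1:ℝ) :=
            Real.rpow_le_rpow_of_exponent_le (by norm_num) hq1
          rw [Real.rpow_one] at h2
          exact mul_le_mul_of_nonneg_right h2 hLc0.le
  have hupper : (∫ t in Set.Ioi (0:ℝ), f t) ≤ C * (Real.log 2 + S) + K * ρ' * α / c := by
    rw [hsplit]
    refine le_trans hupper1 ?_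
    rw [hgint]
    have h7 : (K*ρ'/L) * ((α/2) * (Real.exp ((2/α)*T) - 1)) ≤ (K*ρ'/L) * ((α/2) * (2*(L/c))) := by
      apply mul_le_mul_of_nonneg_left _ (by positivity)
      apply mul_le_mul_of_nonneg_left _ (by positivity)
      linarith
    have h8 : (K*ρ'/L) * ((α/2) * (2*(L/c))) = K * ρ' * α / c := by field_simp
    have h9 : C * T ≤ C * (Real.log 2 + S) := mul_le_mul_of_nonneg_left hTle hC0
    exact add_le_add h9 (h7.trans h8.le)
  -- lower bound
  set h : ℝ → ℝ := fun t => C * (1 - (c/L) * Real.exp ((2/α)*t)) with hhdef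
  have hhcont : Continuous h := continuous_const.mul (continuous_const.sub
    (continuous_const.mul (Real.continuous_exp.comp (continuous_const.mul continuous_id))))
  have hintS : IntegrableOn f (Set.Ioc 0 S) := hfcont.integrableOn_Ioc
  have hinth : IntegrableOn h (Set.Ioc 0 S) := hhcont.integrableOn_Ioc
  have hhf : ∀ t ∈ Set.Ioc 0 S, h t ≤ f t := by
    intro t ht
    obtain ⟨ht0, _⟩ := ht
    have hxt := hx0 t ht0.le
    have hxlet := hxle t ht0.le
    have hm : 1 - (c/L) * Real.exp ((2/α)*t) ≤
        max 0 (1 - (c / L) * (Real.exp t - 1) ^ (2 / α)) := by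
      refine le_trans ?_ (le_max_right _ _)
      have h1 : (c/L) * x t ≤ (c/L) * Real.exp ((2/α)*t) :=
        mul_le_mul_of_nonneg_left hxlet (by positivity)
      simp only [hxdef] at h1
      linarith
    have hCA : C ≤ 1 - Real.exp (-(K * (1 + (ρ' / L) * (Real.exp t - 1) ^ (2 / α)))) := by
      have h1 : 0 ≤ (ρ'/L) * x t := mul_nonneg (by positivity) hxt
      have h2 : Real.exp (-(K * (1 + (ρ' / L) * (Real.exp t - 1) ^ (2 / α)))) ≤ Real.exp (-K) := by
        apply Real.exp_le_exp.mpr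
        simp only [hxdef] at h1
        nlinarith
      rw [hCdef]; linarith
    have hm0 : (0:ℝ) ≤ max 0 (1 - (c / L) * (Real.exp t - 1) ^ (2 / α)) := le_max_left _ _
    calc h t ≤ C * max 0 (1 - (c / L) * (Real.exp t - 1) ^ (2 / α)) :=
          mul_le_mul_of_nonneg_left hm hC0
      _ ≤ f t := mul_le_mul_of_nonneg_right hCA hm0
  have hlow1 : (∫ t in Set.Ioc 0 S, h t) ≤ ∫ t in Set.Ioc 0 S, f t :=
    setIntegral_mono_on hinth hintS measurableSet_Ioc hhf
  have hfae : 0 ≤ᵐ[volume.restrict (Set.Ioc 0 T)] f := by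
    rw [Filter.EventuallyLE, ae_restrict_iff' measurableSet_Ioc]
    exact ae_of_all _ (fun t ht => hfnn t ht.1.le)
  have hlow2 : (∫ t in Set.Ioc 0 S, f t) ≤ ∫ t in Set.Ioc 0 T, f t :=
    setIntegral_mono_set hintT hfae (HasSubset.Subset.eventuallyLE (Set.Ioc_subset_Ioc_right hST))
  have hexpS : Real.exp ((2/α)*S) = L/c := by
    rw [hSdef, show (2/α) * ((α/2) * Real.log (L/c)) = Real.log (L/c) by field_simp]
    exact Real.exp_log hLc0
  have hhint : (∫ t in Set.Ioc 0 S, h t) = C * (S - (c/L) * ((α/2) * (L/c - 1))) := by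
    rw [← intervalIntegral.integral_of_le hS0]
    have h2 : IntervalIntegrable (fun t => (c/L) * Real.exp ((2/α)*t)) volume 0 S :=
      (continuous_const.mul (Real.continuous_exp.comp
        (continuous_const.mul continuous_id))).intervalIntegrable 0 S
    rw [hhdef]
    rw [intervalIntegral.integral_const_mul,
      intervalIntegral.integral_sub intervalIntegrable_const h2,
      intervalIntegral.integral_const, intervalIntegral.integral_const_mul,
      exp_integral α hα0 S, hexpS]
    simp
  have hlower : C * (S - α/2) ≤ (∫ t in Set.Ioi (0:ℝ), f t) := by
    rw [hsplit]
    have h10 : C * (S - α/2) ≤ C * (S - (c/L) * ((α/2) * (L/c - 1))) := by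
      apply mul_le_mul_of_nonneg_left _ hC0
      have h11 : (c/L) * ((α/2) * (L/c - 1)) = (α/2) * (1 - c/L) := by field_simp
      have h12 : c/L ≤ 1 := by rw [div_le_one hL0]; exact hLc
      rw [h11]; nlinarith
    rw [hhint] at hlow1
    linarith
  exact ⟨hlower, hupper⟩


/-- Asymptotic mmW UDN spectral-efficiency bound limit. For `α > 2`, `c > 0`, `K > 0`, `ρ' ≥ 0`:
`(1/log L) · ∫₀^∞ (1 − e^{−K(1 + (ρ'/L)(e^t − 1)^{2/α})}) · max(0, 1 − (c/L)(e^t − 1)^{2/α}) dt`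
tends to `(α/2)(1 − e^{−K})` as `L → ∞`. -/
theorem stmt_10 (α c K ρ' : ℝ) (hα : 2 < α) (hc : 0 < c) (hK : 0 < K) (hρ' : 0 ≤ ρ') :
    Tendsto (fun L : ℝ =>
        (1 / Real.log L) *
          ∫ t in Set.Ioi (0:ℝ),
            (1 - Real.exp (-(K * (1 + (ρ' / L) * (Real.exp t - 1) ^ (2 / α))))) *
              max 0 (1 - (c / L) * (Real.exp t - 1) ^ (2 / α)))
      atTop (nhds ((α / 2) * (1 - Real.exp (-K)))) := by

  have hα0 : (0:ℝ) < α := by linarith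
  set C := 1 - Real.exp (-K) with hCdef
  have hlo : Tendsto (fun L : ℝ =>
      (1 / Real.log L) * (C * ((α/2) * Real.log (L/c) - α/2))) atTop (nhds ((α/2) * C)) := by
    have h := aux_lim (C * (α/2)) (-(C * ((α/2) * Real.log c + α/2)))
    rw [show C * (α/2) = (α/2) * C by ring] at h
    apply Tendsto.congr' _ h
    filter_upwards [eventually_gt_atTop (0:ℝ)] with L hL
    rw [Real.log_div (ne_of_gt hL) (ne_of_gt hc)]
    ring
  have hhi : Tendsto (fun L : ℝ =>
      (1 / Real.log L) * (C * (Real.log 2 + (α/2) * Real.log (L/c)) + K * ρ' * α / c))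
      atTop (nhds ((α/2) * C)) := by
    have h := aux_lim (C * (α/2)) (C * (Real.log 2 - (α/2) * Real.log c) + K * ρ' * α / c)
    rw [show C * (α/2) = (α/2) * C by ring] at h
    apply Tendsto.congr' _ h
    filter_upwards [eventually_gt_atTop (0:ℝ)] with L hL
    rw [Real.log_div (ne_of_gt hL) (ne_of_gt hc)]
    ring
  apply tendsto_of_tendsto_of_tendsto_of_le_of_le' hlo hhi
  · filter_upwards [eventually_gt_atTop (1:ℝ), eventually_ge_atTop c] with L hL1 hLc
    have hkey := (key_bounds α c K ρ' L hα hc hK hρ' hL1 hLc).1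
    have hlog : 0 < Real.log L := Real.log_pos hL1
    exact mul_le_mul_of_nonneg_left hkey (by positivity)
  · filter_upwards [eventually_gt_atTop (1:ℝ), eventually_ge_atTop c] with L hL1 hLc
    have hkey := (key_bounds α c K ρ' L hα hc hK hρ' hL1 hLc).2
    have hlog : 0 < Real.log L := Real.log_pos hL1
    exact mul_le_mul_of_nonneg_left hkey (by positivity)
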